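/- (Bregman's theorem) Let n be a positive integer and R_1, …, R_n ⊆ {1, …, n}. Then the number of permutations σ of {1, …, n} with σ(i) ∈ R_i for every i is at most ∏_{i=1}^n (r_i!)^(1/r_i), where r_i = |R_i|. -/

import Mathlib

open Finset Real

section Helpers
variable {α β : Type} [DecidableEq α] [DecidableEq β]

def restr (i : α) (k : β) :
    {e : α ≃ β // e i = k} ≃ ({x : α // x ≠ i} ≃ {y : β // y ≠ k}) :=
  ((Equiv.equivCongr (Equiv.optionSubtypeNe i) (Equiv.refl β)).symm.subtypeEquiv
    (fun e => by simp [Equiv.equivCongr])).trans (Equiv.optionSubtype k)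

lemma restr_apply (i : α) (k : β) (e : {e : α ≃ β // e i = k}) (j : {x : α // x ≠ i}) :
    ((restr i k e) j : β) = e.1 ↑j := by
  simp [restr, Equiv.equivCongr, Equiv.optionSubtype]

/-- The constrained-equiv restriction bijection. -/
def restrC (R : α → Finset β) (i : α) (k : β) (hk : k ∈ R i) :
    {σ : α ≃ β // (∀ j, σ j ∈ R j) ∧ σ i = k} ≃
      {e : {x : α // x ≠ i} ≃ {y : β // y ≠ k} // ∀ j : {x : α // x ≠ i}, e j ∈ (R ↑j).subtype (· ≠ k)} := by
  refine ((Equiv.subtypeEquivRight (fun σ => and_comm)).trans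
    (Equiv.subtypeSubtypeEquivSubtypeInter (fun σ : α ≃ β => σ i = k)
      (fun σ => ∀ j, σ j ∈ R j)).symm).trans (((restr i k).subtypeEquiv (fun e => ?_)))
  constructor
  · intro h j
    rw [Finset.mem_subtype, restr_apply]
    exact h _
  · intro h j
    by_cases hj : j = i
    · subst hj; rw [e.2]; exact hk
    · have := h ⟨j, hj⟩
      rw [Finset.mem_subtype, restr_apply] at this
      exact this

lemma powHelper (d : ℕ) : (((d.factorial : ℝ)) ^ ((1:ℝ)/d)) ^ d = (d.factorial : ℝ) := by
  rcases Nat.eq_zero_or_pos d with h | h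
  · simp [h]
  · rw [← Real.rpow_natCast (((d.factorial : ℝ)) ^ ((1:ℝ)/d)) d, ← Real.rpow_mul (by positivity)]
    rw [one_div, inv_mul_cancel₀ (by exact_mod_cast h.ne'), Real.rpow_one]

lemma keyB {β : Type} (s : Finset β) (hs : s.Nonempty) (t : β → ℕ) :
    ((∑ k ∈ s, (t k : ℝ)) / s.card) ^ (∑ k ∈ s, t k) ≤ ∏ k ∈ s, (t k : ℝ) ^ (t k) := by
  set A : ℕ := ∑ k ∈ s, t k with hA
  have hr : (0:ℝ) < s.card := by exact_mod_cast Finset.card_pos.mpr hs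
  rcases Nat.eq_zero_or_pos A with h0 | hpos
  · have ht : ∀ k ∈ s, t k = 0 := by
      intro k hk; exact Finset.sum_eq_zero_iff.mp h0 k hk
    rw [h0]
    have : ∀ k ∈ s, (t k : ℝ) ^ (t k) = 1 := by intro k hk; rw [ht k hk]; norm_num
    rw [Finset.prod_congr rfl this, Finset.prod_const_one, pow_zero]
  · have hAR : (0:ℝ) < (A:ℝ) := by exact_mod_cast hpos
    have hsum : (∑ k ∈ s, (t k : ℝ)) = (A:ℝ) := by rw [hA]; push_cast; ring
    rw [hsum]
    have hL : (0:ℝ) < ((A:ℝ)/s.card) ^ A := by positivity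
    have hRpos : (0:ℝ) < ∏ k ∈ s, (t k : ℝ) ^ (t k) := by
      apply Finset.prod_pos; intro k hk
      rcases Nat.eq_zero_or_pos (t k) with h | h
      · rw [h]; norm_num
      · have : (0:ℝ) < t k := by exact_mod_cast h
        positivity
    rw [← Real.log_le_log_iff hL hRpos]
    rw [Real.log_pow, Real.log_prod]
    swap
    · intro k hk
      rcases Nat.eq_zero_or_pos (t k) with h | h
      · rw [h]; norm_num
      · positivity
    simp_rw [Real.log_pow]
    have jensen := Real.convexOn_mul_log.map_sum_le (t := s) (w := fun _ => (1:ℝ)/s.card)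
      (p := fun k => (t k : ℝ)) (fun i _ => by positivity)
      (by rw [Finset.sum_const, nsmul_eq_mul]; field_simp)
      (fun i _ => Set.mem_Ici.mpr (Nat.cast_nonneg _))
    simp only [smul_eq_mul] at jensen
    have hsum' : (∑ i ∈ s, (1:ℝ)/s.card * (t i : ℝ)) = (A:ℝ)/s.card := by
      rw [← Finset.mul_sum, hsum]; ring
    rw [hsum'] at jensen
    have key := mul_le_mul_of_nonneg_left jensen (le_of_lt hr)
    rw [Finset.mul_sum] at key
    calc (A:ℝ) * Real.log ((A:ℝ)/s.card)
        = (s.card:ℝ) * ((A:ℝ)/s.card * Real.log ((A:ℝ)/s.card)) := by field_simp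
      _ ≤ ∑ i ∈ s, (s.card:ℝ) * ((1:ℝ)/s.card * ((t i:ℝ) * Real.log (t i))) := key
      _ = ∑ i ∈ s, (t i:ℝ) * Real.log (t i) := by
          apply Finset.sum_congr rfl; intro i _; field_simp

end Helpers

theorem breg (N : ℕ) : ∀ (α β : Type) [Fintype α] [Fintype β] [DecidableEq α] [DecidableEq β]
    (R : α → Finset β), Fintype.card α = N →
    (((Finset.univ.filter (fun σ : α ≃ β => ∀ i, σ i ∈ R i)).card : ℝ)) ≤
      ∏ i, ((R i).card.factorial : ℝ) ^ ((1:ℝ)/((R i).card : ℝ)) := by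
  induction N using Nat.strong_induction_on with
  | _ N IH =>
  intro α β _ _ _ _ R hcard
  set T := Finset.univ.filter (fun σ : α ≃ β => ∀ i, σ i ∈ R i) with hT
  rcases Nat.eq_zero_or_pos T.card with h0 | hper
  · rw [h0]; push_cast; positivity
  obtain ⟨σ0, hσ0mem⟩ := Finset.card_pos.mp hper
  have hσ0 : ∀ i, σ0 i ∈ R i := (Finset.mem_filter.mp hσ0mem).2
  have hβcard : Fintype.card β = N := hcard ▸ (Fintype.card_congr σ0).symm
  rcases N with _ | m
  · -- empty case
    have hα : IsEmpty α := Fintype.card_eq_zero_iff.mp hcard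
    rw [Finset.univ_eq_empty, Finset.prod_empty]
    have : T.card ≤ Fintype.card (α ≃ β) := (Finset.card_le_univ T).trans_eq Finset.card_univ
    rw [Fintype.card_equiv σ0, hcard] at this
    exact_mod_cast this
  -- main case, card α = m+1
  have hrpos : ∀ j, 0 < (R j).card := fun j => Finset.card_pos.mpr ⟨σ0 j, hσ0 j⟩
  have hrle : ∀ j, (R j).card ≤ m + 1 := fun j => hβcard ▸ (Finset.card_le_univ (R j)).trans_eq Finset.card_univ
  set c : α → β → ℕ := fun i k => (T.filter (fun σ => σ i = k)).card with hc
  -- Step 1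
  have step1 : ∀ i, T.card = ∑ k ∈ R i, c i k := by
    intro i
    have h1 : T.card = ∑ k ∈ Finset.univ, c i k :=
      Finset.card_eq_sum_card_fiberwise (fun σ _ => Finset.mem_univ _)
    rw [h1]
    refine (Finset.sum_subset (Finset.subset_univ _) ?_).symm
    intro k _ hk
    rw [hc]
    simp only
    rw [Finset.card_eq_zero, Finset.filter_eq_empty_iff]
    intro σ hσ hik
    exact hk (hik ▸ (Finset.mem_filter.mp hσ).2 i)
  -- Step 2
  have step2 : ∀ i, ∏ σ ∈ T, (c i (σ i) : ℝ) = ∏ k ∈ R i, (c i k : ℝ) ^ (c i k) := by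
    intro i
    rw [← Finset.prod_fiberwise_of_maps_to (g := fun σ : α ≃ β => σ i) (t := Finset.univ)
      (fun σ _ => Finset.mem_univ _) (fun σ => (c i (σ i) : ℝ))]
    rw [← Finset.prod_subset (Finset.subset_univ (R i)) (f := fun k =>
        ∏ σ ∈ T.filter (fun σ => σ i = k), (c i (σ i) : ℝ))]
    · apply Finset.prod_congr rfl
      intro k _
      rw [Finset.prod_congr rfl (fun σ hσ => by
        rw [(Finset.mem_filter.mp hσ).2]), Finset.prod_const]
    · intro k _ hk
      have : T.filter (fun σ => σ i = k) = ∅ := by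
        rw [Finset.filter_eq_empty_iff]
        intro σ hσ hik
        exact hk (hik ▸ (Finset.mem_filter.mp hσ).2 i)
      rw [this, Finset.prod_empty]
  -- Step 3
  have step3 : ∀ i, ((T.card : ℝ)) ^ T.card ≤
      ((R i).card : ℝ) ^ T.card * ∏ σ ∈ T, (c i (σ i) : ℝ) := by
    intro i
    have hB := keyB (R i) ⟨σ0 i, hσ0 i⟩ (c i)
    have hsumc : (∑ k ∈ R i, (c i k : ℝ)) = (T.card : ℝ) := by
      rw [step1 i]; push_cast; ring
    rw [hsumc, ← step1 i] at hB
    rw [step2 i]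
    calc ((T.card : ℝ)) ^ T.card
        = ((R i).card : ℝ) ^ T.card * ((T.card : ℝ) / (R i).card) ^ T.card := by
          rw [← mul_pow, mul_div_cancel₀]
          exact_mod_cast (hrpos i).ne'
      _ ≤ ((R i).card : ℝ) ^ T.card * ∏ k ∈ R i, (c i k : ℝ) ^ (c i k) := by
          apply mul_le_mul_of_nonneg_left hB (by positivity)
  -- Step 4
  have step4 : ((T.card : ℝ)) ^ ((m+1) * T.card) ≤
      ∏ σ ∈ T, ∏ i : α, (((R i).card : ℝ) * c i (σ i)) := by
    have hL : ((T.card : ℝ)) ^ ((m+1) * T.card) = ∏ _i : α, ((T.card : ℝ)) ^ T.card := by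
      rw [Finset.prod_const, Finset.card_univ, hcard, ← pow_mul, Nat.mul_comm]
    rw [hL]
    calc ∏ _i : α, ((T.card : ℝ)) ^ T.card
        ≤ ∏ i : α, (((R i).card : ℝ) ^ T.card * ∏ σ ∈ T, (c i (σ i) : ℝ)) := by
          apply Finset.prod_le_prod (fun i _ => by positivity) (fun i _ => step3 i)
      _ = ∏ i : α, ∏ σ ∈ T, (((R i).card : ℝ) * c i (σ i)) := by
          apply Finset.prod_congr rfl
          intro i _
          rw [Finset.prod_mul_distrib, Finset.prod_const]
      _ = ∏ σ ∈ T, ∏ i : α, (((R i).card : ℝ) * c i (σ i)) := Finset.prod_comm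
  -- auxiliary facts
  have hcard' : ∀ i : α, Fintype.card {x : α // x ≠ i} = m := by
    intro i
    rw [Fintype.card_subtype, Finset.filter_ne', Finset.card_erase_of_mem (Finset.mem_univ i),
      Finset.card_univ, hcard]
    omega
  set g : α → β → ℝ := fun j k =>
    (((if k ∈ R j then (R j).card - 1 else (R j).card).factorial : ℝ)) ^
      ((1:ℝ)/(((if k ∈ R j then (R j).card - 1 else (R j).card) : ℕ) : ℝ)) with hg
  -- Step 5
  have step5 : ∀ σ ∈ T, ∀ i : α, (c i (σ i) : ℝ) ≤ ∏ j ∈ Finset.univ.erase i, g j (σ i) := by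
    intro σ hσT i
    have hσR : ∀ j, σ j ∈ R j := (Finset.mem_filter.mp hσT).2
    set k := σ i with hkdef
    have hk : k ∈ R i := hσR i
    set R' : {x : α // x ≠ i} → Finset {y : β // y ≠ k} :=
      fun j => (R ↑j).subtype (· ≠ k) with hR'
    have e1 : c i k = Fintype.card {σ' : α ≃ β // (∀ j, σ' j ∈ R j) ∧ σ' i = k} := by
      rw [Fintype.card_subtype, hc]
      simp only [hT, Finset.filter_filter]
    have e2 : Fintype.card {σ' : α ≃ β // (∀ j, σ' j ∈ R j) ∧ σ' i = k} =
        Fintype.card {e : {x : α // x ≠ i} ≃ {y : β // y ≠ k} //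
          ∀ j : {x : α // x ≠ i}, e j ∈ R' j} := Fintype.card_congr (restrC R i k hk)
    have e3 : Fintype.card {e : {x : α // x ≠ i} ≃ {y : β // y ≠ k} //
          ∀ j : {x : α // x ≠ i}, e j ∈ R' j} =
        (Finset.univ.filter (fun e : {x : α // x ≠ i} ≃ {y : β // y ≠ k} =>
          ∀ j : {x : α // x ≠ i}, e j ∈ R' j)).card := Fintype.card_subtype _
    have hR'card : ∀ j : {x : α // x ≠ i},
        (R' j).card = if k ∈ R ↑j then (R ↑j).card - 1 else (R ↑j).card := by
      intro j
      rw [hR']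
      simp only
      rw [Finset.card_subtype, Finset.filter_ne']
      by_cases h : k ∈ R ↑j
      · rw [if_pos h, Finset.card_erase_of_mem h]
      · rw [if_neg h, Finset.erase_eq_of_notMem h]
    have ihb := IH m (Nat.lt_succ_self m) {x : α // x ≠ i} {y : β // y ≠ k} R' (hcard' i)
    calc (c i k : ℝ) = ((Finset.univ.filter (fun e : {x : α // x ≠ i} ≃ {y : β // y ≠ k} =>
          ∀ j : {x : α // x ≠ i}, e j ∈ R' j)).card : ℝ) := by rw [e1, e2, e3]
      _ ≤ ∏ j : {x : α // x ≠ i}, ((R' j).card.factorial : ℝ) ^ ((1:ℝ)/((R' j).card : ℝ)) := ihb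
      _ = ∏ j : {x : α // x ≠ i}, g ↑j k := by
          apply Finset.prod_congr rfl
          intro j _
          rw [hR'card j, hg]
      _ = ∏ j ∈ Finset.univ.erase i, g j k := by
          exact (Finset.prod_subtype (Finset.univ.erase i)
            (fun x => by simp [Finset.mem_erase]) (fun j => g j k)).symm
  -- Step 6
  have step6 : ∀ σ ∈ T, ∏ i : α, (((R i).card : ℝ) * ∏ j ∈ Finset.univ.erase i, g j (σ i)) =
      ∏ j : α, (((R j).card.factorial : ℝ) ^ ((1:ℝ)/((R j).card : ℝ))) ^ (m+1) := by
    intro σ hσT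
    have hσR : ∀ j, σ j ∈ R j := (Finset.mem_filter.mp hσT).2
    rw [Finset.prod_mul_distrib]
    have swap : (∏ i : α, ∏ j ∈ Finset.univ.erase i, g j (σ i)) =
        ∏ j : α, ∏ i ∈ Finset.univ.erase j, g j (σ i) := by
      apply Finset.prod_comm' (t := fun x => Finset.univ.erase x)
        (s' := fun y => Finset.univ.erase y)
      intro x y
      simp only [Finset.mem_erase, Finset.mem_univ, and_true, true_and]
      exact ⟨fun h => h.symm, fun h => h.symm⟩
    rw [swap, ← Finset.prod_mul_distrib]
    apply Finset.prod_congr rfl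
    intro j _
    set r := (R j).card with hr
    set F : ℝ := ((R j).card.factorial : ℝ) ^ ((1:ℝ)/((R j).card : ℝ)) with hF
    have hfib : (Finset.univ.filter (fun i => σ i ∈ R j)).card = r := by
      have himg : Finset.univ.filter (fun i => σ i ∈ R j) = (R j).map ⟨σ.symm, σ.symm.injective⟩ := by
        ext x
        simp only [Finset.mem_filter, Finset.mem_univ, true_and, Finset.mem_map,
          Function.Embedding.coeFn_mk]
        constructor
        · intro h; exact ⟨σ x, h, by simp⟩
        · rintro ⟨a, ha, rfl⟩; simpa
      rw [himg, Finset.card_map]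
    have ha : ((Finset.univ.erase j).filter (fun i => σ i ∈ R j)).card = r - 1 := by
      rw [Finset.filter_erase, Finset.card_erase_of_mem
        (Finset.mem_filter.mpr ⟨Finset.mem_univ j, hσR j⟩), hfib]
    have hec : (Finset.univ.erase j).card = m := by
      rw [Finset.card_erase_of_mem (Finset.mem_univ j), Finset.card_univ, hcard]
      omega
    have hb : ((Finset.univ.erase j).filter (fun i => ¬ σ i ∈ R j)).card = (m+1) - r := by
      have htot := Finset.card_filter_add_card_filter_not
        (s := Finset.univ.erase j) (p := fun i => σ i ∈ R j)
      have h1 := hrpos j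
      have h2 := hrle j
      omega
    rw [← Finset.prod_filter_mul_prod_filter_not (Finset.univ.erase j) (fun i => σ i ∈ R j)]
    have h1 : (∏ i ∈ (Finset.univ.erase j).filter (fun i => σ i ∈ R j), g j (σ i)) =
        ((r - 1).factorial : ℝ) := by
      have hconst : ∀ i ∈ (Finset.univ.erase j).filter (fun i => σ i ∈ R j),
          g j (σ i) = (((r-1).factorial : ℝ)) ^ ((1:ℝ)/((r - 1 : ℕ) : ℝ)) := by
        intro i hi
        have : σ i ∈ R j := (Finset.mem_filter.mp hi).2
        rw [hg]
        simp only [if_pos this]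
        rw [hr]
      rw [Finset.prod_congr rfl hconst, Finset.prod_const, ha, powHelper]
    have h2 : (∏ i ∈ (Finset.univ.erase j).filter (fun i => ¬ σ i ∈ R j), g j (σ i)) =
        F ^ ((m+1) - r) := by
      have hconst : ∀ i ∈ (Finset.univ.erase j).filter (fun i => ¬ σ i ∈ R j),
          g j (σ i) = F := by
        intro i hi
        have : ¬ σ i ∈ R j := (Finset.mem_filter.mp hi).2
        rw [hg, hF]
        simp only [if_neg this]
      rw [Finset.prod_congr rfl hconst, Finset.prod_const, hb]
    rw [h1, h2]
    have hfac : ((r : ℝ)) * ((r - 1).factorial : ℝ) = (r.factorial : ℝ) := by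
      exact_mod_cast congrArg (Nat.cast (R := ℝ)) (Nat.mul_factorial_pred (hrpos j).ne')
    have hFr : F ^ r = (r.factorial : ℝ) := powHelper r
    calc (r : ℝ) * (((r - 1).factorial : ℝ) * F ^ ((m+1) - r))
        = ((r:ℝ) * ((r - 1).factorial : ℝ)) * F ^ ((m+1) - r) := by ring
      _ = (r.factorial : ℝ) * F ^ ((m+1) - r) := by rw [hfac]
      _ = F ^ r * F ^ ((m+1) - r) := by rw [hFr]
      _ = F ^ (m+1) := by
          rw [← pow_add]
          congr 1
          have := hrle j
          have := hrpos j
          omega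
  -- Conclusion
  set B : ℝ := ∏ j : α, ((R j).card.factorial : ℝ) ^ ((1:ℝ)/((R j).card : ℝ)) with hB
  have hBnn : 0 ≤ B := by
    rw [hB]; positivity
  have final : ((T.card : ℝ)) ^ ((m+1) * T.card) ≤ B ^ ((m+1) * T.card) := by
    calc ((T.card : ℝ)) ^ ((m+1) * T.card)
        ≤ ∏ σ ∈ T, ∏ i : α, (((R i).card : ℝ) * c i (σ i)) := step4
      _ ≤ ∏ σ ∈ T, ∏ j : α, (((R j).card.factorial : ℝ) ^ ((1:ℝ)/((R j).card : ℝ))) ^ (m+1) := by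
          apply Finset.prod_le_prod
          · intro σ _
            apply Finset.prod_nonneg
            intro i _
            positivity
          · intro σ hσ
            rw [← step6 σ hσ]
            apply Finset.prod_le_prod
            · intro i _; positivity
            · intro i _
              exact mul_le_mul_of_nonneg_left (step5 σ hσ i) (by positivity)
      _ = (∏ j : α, (((R j).card.factorial : ℝ) ^ ((1:ℝ)/((R j).card : ℝ))) ^ (m+1)) ^ T.card :=
          Finset.prod_const _
      _ = (B ^ (m+1)) ^ T.card := by rw [Finset.prod_pow]
      _ = B ^ ((m+1) * T.card) := by rw [← pow_mul]
  exact (pow_le_pow_iff_left₀ (Nat.cast_nonneg _) hBnn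
    (Nat.mul_ne_zero (Nat.succ_ne_zero m) hper.ne')).mp final

theorem stmt_6 (n : ℕ) (hn : 1 ≤ n) (R : Fin n → Finset (Fin n)) :
    (Nat.card {σ : Equiv.Perm (Fin n) | ∀ i, σ i ∈ R i} : ℝ) ≤
      ∏ i, ((R i).card.factorial : ℝ) ^ ((1 : ℝ) / ((R i).card : ℝ)) := by
  have h := breg n (Fin n) (Fin n) R (Fintype.card_fin n)
  have hcc : Nat.card {σ : Equiv.Perm (Fin n) | ∀ i, σ i ∈ R i} =
      (Finset.univ.filter (fun σ : Fin n ≃ Fin n => ∀ i, σ i ∈ R i)).card := by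
    rw [Nat.card_eq_fintype_card]
    simp [Set.coe_setOf, Fintype.card_subtype]
  rw [hcc]
  convert h using 4
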